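/- Let X be a finite set of finite-domain variables and Ψ a finite set of scoped real-valued functions ⟨S, ψ⟩ with S ⊆ X. For any ordering σ of X, the bucket elimination procedure — which repeatedly eliminates the σ-largest variable X_i by replacing all functions whose scope's largest variable is X_i with the single function ψ_{X_i}(ν) = max_{x ∈ dom(X_i)} Σ_j ψ_j((ν ∪ {X_i ↦ x})|_{S_j}) — terminates with the value Max(Ψ) = max over total assignments ν of Σ_{⟨S,ψ⟩∈Ψ} ψ(ν|_S). -/

import Mathlib

/-- Total assignments over finite-domain variables. -/
abbrev Asg (X : Type) (D : X → Type) := ∀ x, D x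

/-- A scoped function: a scope together with a function on assignments
(which is supposed to depend only on the scope). -/
abbrev Scoped (X : Type) (D : X → Type) := Finset X × (Asg X D → ℝ)

/-- One bucket-elimination step: eliminate the variable `x` by replacing all functions
whose scope contains `x` with the single function
`ψ_x(ν) = max_{a ∈ dom(x)} Σ_j ψ_j(ν[x ↦ a])`, scoped on the union of their scopes minus `x`. -/
noncomputable def elimStep {X : Type} [DecidableEq X] {D : X → Type}
    [∀ x, Fintype (D x)] [∀ x, Nonempty (D x)]
    (x : X) (Ψ : List (Scoped X D)) : List (Scoped X D) :=
  let Ψ1 := Ψ.filter fun p => decide (x ∈ p.1)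
  let Ψ0 := Ψ.filter fun p => decide (x ∉ p.1)
  ⟨(Ψ1.foldr (fun (p : Scoped X D) acc => p.1 ∪ acc) ∅).erase x,
    fun ν => Finset.univ.sup' Finset.univ_nonempty fun a : D x =>
      (Ψ1.map fun p => p.2 (Function.update ν x a)).sum⟩ :: Ψ0

/-- `Max(Ψ)`: the maximum over total assignments of the sum of all scoped functions. -/
noncomputable def MaxPsi {X : Type} {D : X → Type} [Fintype X] [DecidableEq X]
    [∀ x, Fintype (D x)] [∀ x, Nonempty (D x)] (Ψ : List (Scoped X D)) : ℝ :=
  Finset.univ.sup' Finset.univ_nonempty fun ν : Asg X D => (Ψ.map fun p => p.2 ν).sum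

set_option linter.unusedSectionVars false
section
variable {X : Type} [DecidableEq X] {D : X → Type}
    [∀ x, Fintype (D x)] [∀ x, Nonempty (D x)]

def Good (Φ : List (Scoped X D)) : Prop :=
  ∀ p ∈ Φ, ∀ ν ν' : Asg X D, (∀ x ∈ p.1, ν x = ν' x) → p.2 ν = p.2 ν'

lemma mem_foldr_union (L : List (Scoped X D)) (y : X) :
    y ∈ L.foldr (fun (p : Scoped X D) acc => p.1 ∪ acc) ∅ ↔ ∃ p ∈ L, y ∈ p.1 := by
  induction L with
  | nil => simp
  | cons a t ih => simp [ih]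

lemma sum_split (L : List (Scoped X D)) (x : X) (f : Scoped X D → ℝ) :
    (((L.filter fun p => decide (x ∈ p.1)).map f).sum
      + ((L.filter fun p => decide (x ∉ p.1)).map f).sum) = (L.map f).sum := by
  induction L with
  | nil => simp
  | cons a t ih =>
    by_cases h : x ∈ a.1 <;>
      simp only [List.filter_cons, h, decide_not, decide_true, decide_false,
        Bool.not_true, Bool.not_false, if_true, if_false, List.map_cons, List.sum_cons,
        decide_eq_true_eq, if_pos, if_neg, not_true, not_false_iff] <;>
      simp_all <;> linarith

lemma sup'_add_const {α : Type} (s : Finset α) (h : s.Nonempty) (f : α → ℝ) (c : ℝ) :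
    s.sup' h f + c = s.sup' h fun a => f a + c := by
  apply le_antisymm
  · obtain ⟨a, ha, hfa⟩ := Finset.exists_mem_eq_sup' h f
    rw [hfa]; exact Finset.le_sup' (fun a => f a + c) ha
  · exact Finset.sup'_le _ _ fun a ha => add_le_add_left (Finset.le_sup' f ha) c

lemma elimStep_good (x : X) (Φ : List (Scoped X D)) (hg : Good Φ) :
    Good (elimStep x Φ) := by
  intro p hp ν ν' hagree
  simp only [elimStep, List.mem_cons] at hp
  rcases hp with hp | hp
  · subst hp
    apply Finset.sup'_congr Finset.univ_nonempty rfl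
    intro a _
    congr 1
    apply List.map_congr_left
    intro q hq
    have hqΦ : q ∈ Φ := (List.mem_filter.mp hq).1
    apply hg q hqΦ
    intro z hz
    rcases eq_or_ne z x with rfl | hzx
    · simp
    · rw [Function.update_of_ne hzx, Function.update_of_ne hzx]
      apply hagree
      simp only [Finset.mem_erase]
      exact ⟨hzx, (mem_foldr_union _ z).mpr ⟨q, hq, hz⟩⟩
  · exact hg p (List.mem_filter.mp hp).1 ν ν' hagree

lemma elimStep_avoid (x y : X) (Φ : List (Scoped X D))
    (hy : y = x ∨ ∀ p ∈ Φ, y ∉ p.1) :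
    ∀ p ∈ elimStep x Φ, y ∉ p.1 := by
  intro p hp
  simp only [elimStep, List.mem_cons] at hp
  rcases hp with hp | hp
  · subst hp
    intro hmem
    rw [Finset.mem_erase, mem_foldr_union] at hmem
    obtain ⟨hyx, q, hq, hyq⟩ := hmem
    rcases hy with rfl | hy
    · exact hyx rfl
    · exact hy q (List.mem_filter.mp hq).1 hyq
  · have := List.mem_filter.mp hp
    rcases hy with rfl | hy
    · simpa using this.2
    · exact hy p this.1

lemma elimStep_max [Fintype X] (x : X) (Φ : List (Scoped X D)) (hg : Good Φ) :
    MaxPsi (elimStep x Φ) = MaxPsi Φ := by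
  unfold MaxPsi
  have key : ∀ ν : Asg X D,
      ((elimStep x Φ).map fun p => p.2 ν).sum
        = Finset.univ.sup' Finset.univ_nonempty fun a : D x =>
            (Φ.map fun p => p.2 (Function.update ν x a)).sum := by
    intro ν
    simp only [elimStep, List.map_cons, List.sum_cons]
    rw [sup'_add_const]
    apply Finset.sup'_congr Finset.univ_nonempty rfl
    intro a _
    have h0 : ((Φ.filter fun p => decide (x ∉ p.1)).map fun p => p.2 ν).sum
        = ((Φ.filter fun p => decide (x ∉ p.1)).map
            fun p => p.2 (Function.update ν x a)).sum := by
      congr 1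
      apply List.map_congr_left
      intro q hq
      have hmem := List.mem_filter.mp hq
      have hxq : x ∉ q.1 := by simpa using hmem.2
      apply hg q hmem.1
      intro z hz
      rw [Function.update_of_ne (by rintro rfl; exact hxq hz)]
    rw [h0, sum_split]
  simp only [key]
  apply le_antisymm
  · apply Finset.sup'_le
    intro ν _
    apply Finset.sup'_le
    intro a _
    exact Finset.le_sup' (fun ν' : Asg X D => (Φ.map fun p => p.2 ν').sum)
      (Finset.mem_univ (Function.update ν x a))
  · apply Finset.sup'_le
    intro ν _
    calc (Φ.map fun p => p.2 ν).sum
        = (Φ.map fun p => p.2 (Function.update ν x (ν x))).sum := by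
          rw [Function.update_eq_self]
      _ ≤ Finset.univ.sup' Finset.univ_nonempty fun a : D x =>
            (Φ.map fun p => p.2 (Function.update ν x a)).sum :=
          Finset.le_sup' (fun a : D x => (Φ.map fun p => p.2 (Function.update ν x a)).sum)
            (Finset.mem_univ (ν x))
      _ ≤ _ := Finset.le_sup'
          (fun ν' : Asg X D => Finset.univ.sup' Finset.univ_nonempty fun a : D x =>
            (Φ.map fun p => p.2 (Function.update ν' x a)).sum)
          (Finset.mem_univ ν)

lemma fold_lemma [Fintype X] (σ : List X) :
    ∀ Φ : List (Scoped X D), Good Φ →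
      Good (σ.foldl (fun Φ x => elimStep x Φ) Φ) ∧
      (∀ y, (∀ p ∈ Φ, y ∉ p.1) →
        ∀ p ∈ σ.foldl (fun Φ x => elimStep x Φ) Φ, y ∉ p.1) ∧
      (∀ x ∈ σ, ∀ p ∈ σ.foldl (fun Φ x => elimStep x Φ) Φ, x ∉ p.1) ∧
      MaxPsi (σ.foldl (fun Φ x => elimStep x Φ) Φ) = MaxPsi Φ := by
  induction σ with
  | nil => intro Φ hg; exact ⟨hg, fun y h => h, by simp, rfl⟩
  | cons x t ih =>
    intro Φ hg
    have hg' := elimStep_good x Φ hg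
    obtain ⟨g1, g2, g3, g4⟩ := ih (elimStep x Φ) hg'
    refine ⟨g1, ?_, ?_, ?_⟩
    · intro y hy
      exact g2 y (elimStep_avoid x y Φ (Or.inr hy))
    · intro z hz
      rcases List.mem_cons.mp hz with rfl | hz
      · exact g2 z (elimStep_avoid z z Φ (Or.inl rfl))
      · exact g3 z hz
    · simp only [List.foldl_cons]
      rw [g4, elimStep_max x Φ hg]
end

/-- Bucket elimination, processing the variables in any order `σ` covering all variables,
terminates with the value `Max(Ψ)` (the remaining functions are constants; their sum,
evaluated at an arbitrary assignment `ν₀`, equals `Max(Ψ)`). -/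
theorem stmt8 {X : Type} [Fintype X] [DecidableEq X] {D : X → Type}
    [∀ x, Fintype (D x)] [∀ x, Nonempty (D x)]
    (Ψ : List (Scoped X D))
    (hscope : ∀ p ∈ Ψ, ∀ ν ν' : Asg X D, (∀ x ∈ p.1, ν x = ν' x) → p.2 ν = p.2 ν')
    (σ : List X) (hnodup : σ.Nodup) (hall : ∀ x : X, x ∈ σ) :
    ∀ ν₀ : Asg X D,
      ((σ.foldl (fun Φ x => elimStep x Φ) Ψ).map fun p => p.2 ν₀).sum = MaxPsi Ψ := by
  intro ν₀
  obtain ⟨g1, _, g3, g4⟩ := fold_lemma σ Ψ hscope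
  set Φf := σ.foldl (fun Φ x => elimStep x Φ) Ψ with hΦf
  have hconst : ∀ ν : Asg X D, (Φf.map fun p => p.2 ν).sum
      = (Φf.map fun p => p.2 ν₀).sum := by
    intro ν
    congr 1
    apply List.map_congr_left
    intro p hp
    apply g1 p hp
    intro z hz
    exact absurd hz (g3 z (hall z) p hp)
  have : MaxPsi Φf = (Φf.map fun p => p.2 ν₀).sum := by
    unfold MaxPsi
    simp only [hconst]
    exact Finset.sup'_const _ _
  rw [← this, g4]
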